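/- Let E = ω ∪ {ω₁·ξ : ξ < ω₁} considered as a subspace of the ordinal ω₁·ω₁ with its order topology. Then E is locally compact, the set T = {ω₁·ξ : ξ < ω₁} is a tail of E that is homeomorphic to ω₁ and closed unbounded in ω₁·ω₁, but no tail of E is a tail (final segment) of ω₁·ω₁. -/

import Mathlib

open Set Topology

lemma aux_lc : LocallyCompactSpace Ordinal.{u} := by
  constructor
  intro x n hn
  rcases eq_or_ne x 0 with rfl | hx
  · refine ⟨{0}, ?_, by simpa using mem_of_mem_nhds hn, isCompact_singleton⟩
    exact (Ordinal.isOpen_singleton_iff.2 Ordinal.not_isSuccLimit_zero).mem_nhds rfl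
  · obtain ⟨b, hb, hbn⟩ := exists_Ioc_subset_of_mem_nhds hn ⟨0, pos_iff_ne_zero.2 hx⟩
    have h1 : Set.Ioc b x = Set.Icc (Order.succ b) x := by ext c; simp [Order.succ_le_iff]
    have h2 : Set.Ioc b x = Set.Ioo b (Order.succ x) := by ext c; simp [Order.lt_succ_iff]
    refine ⟨Set.Ioc b x, ?_, hbn, h1 ▸ isCompact_Icc⟩
    rw [h2]
    exact isOpen_Ioo.mem_nhds ⟨hb, Order.lt_succ x⟩

lemma aux_embed {g : Ordinal.{u} → Ordinal.{u}} (hg : Order.IsNormal g) :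
    Topology.IsEmbedding g := by
  obtain ⟨hmono, hcont⟩ := Order.isNormal_iff_strictMono_and_continuous.1 hg
  refine ⟨isInducing_iff_nhds.2 fun x =>
    le_antisymm (Filter.tendsto_iff_comap.1 hcont.continuousAt) ?_, hmono.injective⟩
  intro s hs
  rw [Filter.mem_comap]
  rcases eq_or_ne x 0 with rfl | hx
  · refine ⟨Set.Iio (Order.succ (g 0)),
      isOpen_Iio.mem_nhds (Set.mem_Iio.2 (Order.lt_succ _)), fun y hy => ?_⟩
    have : y ≤ 0 := hmono.le_iff_le.1 (Order.lt_succ_iff.1 hy)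
    simpa [nonpos_iff_eq_zero.1 this] using mem_of_mem_nhds hs
  · obtain ⟨b, hb, hbs⟩ := exists_Ioc_subset_of_mem_nhds hs ⟨0, pos_iff_ne_zero.2 hx⟩
    have h2 : Set.Ioc (g b) (g x) = Set.Ioo (g b) (Order.succ (g x)) := by
      ext c; simp [Order.lt_succ_iff]
    refine ⟨Set.Ioc (g b) (g x), ?_,
      fun y hy => hbs ⟨hmono.lt_iff_lt.1 hy.1, hmono.le_iff_le.1 hy.2⟩⟩
    rw [h2]
    exact isOpen_Ioo.mem_nhds ⟨hmono hb, Order.lt_succ _⟩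


/-- `C` is a closed unbounded (club) subset of the ordinal `δ`. -/
def IsClubIn (C : Set Ordinal) (δ : Ordinal) : Prop :=
  C ⊆ Set.Iio δ ∧
  (∀ a < δ, ∃ b ∈ C, a ≤ b ∧ b < δ) ∧
  (∀ a < δ, a ≠ 0 → (∀ b < a, ∃ c ∈ C, b < c ∧ c < a) → a ∈ C)

/-- Let `E = ω ∪ {ω₁·ξ : 0 < ξ < ω₁}` inside the ordinal `ω₁·ω₁`. Then `E` is locally
compact, `T = {ω₁·ξ : 0 < ξ < ω₁}` is a tail of `E`, homeomorphic to `ω₁`, and club in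
`ω₁·ω₁`, but no tail of `E` is a final segment of `ω₁·ω₁`. -/
theorem example_tail_not_tail :
    let ω1 : Ordinal := (Cardinal.aleph 1).ord
    let δ : Ordinal := ω1 * ω1
    let T : Set Ordinal := {x | ∃ ξ : Ordinal, 0 < ξ ∧ ξ < ω1 ∧ x = ω1 * ξ}
    let E : Set Ordinal := {x | x < Ordinal.omega0} ∪ T
    LocallyCompactSpace ↥E ∧
    (∃ β < δ, T = {x | x ∈ E ∧ β ≤ x}) ∧
    Nonempty (↥T ≃ₜ ↥(Set.Iio ω1)) ∧
    IsClubIn T δ ∧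
    ¬ ∃ β < δ, ∃ γ < δ, {x | x ∈ E ∧ β ≤ x} = Set.Ico γ δ := by
  intro ω1 δ T E
  have hω0lt : Ordinal.omega0 < ω1 := by
    have := Cardinal.ord_lt_ord.2 Cardinal.aleph0_lt_aleph_one
    rwa [Cardinal.ord_aleph0] at this
  have hω1pos : (0 : Ordinal) < ω1 := Ordinal.omega0_pos.trans hω0lt
  have hω1lim : Order.IsSuccLimit ω1 := Cardinal.isSuccLimit_ord (Cardinal.aleph0_le_aleph 1)
  have hδlim : Order.IsSuccLimit δ := (Ordinal.isNormal_mul_right hω1pos).map_isSuccLimit hω1lim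
  have hTlb : ∀ x ∈ T, ω1 ≤ x := by
    rintro x ⟨ξ, hξ0, hξ1, rfl⟩
    calc ω1 = ω1 * 1 := (mul_one _).symm
    _ ≤ ω1 * ξ := mul_le_mul_right (Order.one_le_iff_pos.2 hξ0) _
  have hT_sub : T ⊆ Set.Iio δ := by
    rintro x ⟨ξ, hξ0, hξ1, rfl⟩
    exact (mul_lt_mul_iff_right₀ hω1pos).2 hξ1
  -- key divisibility lemma
  have hkey : ∀ a : Ordinal, a ≠ 0 → (∀ b < a, ∃ c ∈ T, b < c ∧ c ≤ a) →
      ∃ q, 0 < q ∧ a = ω1 * q := by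
    intro a ha h
    have hmod : a % ω1 = 0 := by
      by_contra hr
      have h1 : ω1 * (a / ω1) < a := by
        conv_rhs => rw [← Ordinal.div_add_mod a ω1]
        simpa using (add_lt_add_iff_left (ω1 * (a / ω1))).2
          (pos_iff_ne_zero.2 hr)
      obtain ⟨c, ⟨ξ, hξ0, hξ1, rfl⟩, hc1, hc2⟩ := h _ h1
      have hq : a / ω1 < ξ := (mul_lt_mul_iff_right₀ hω1pos).1 hc1
      have h3 : ω1 * (a / ω1 + 1) ≤ ω1 * ξ :=
        mul_le_mul_right (Order.add_one_le_iff.2 hq) _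
      have h4 : a < ω1 * (a / ω1 + 1) := by
        rw [Ordinal.add_one_eq_succ, Ordinal.mul_succ]
        conv_lhs => rw [← Ordinal.div_add_mod a ω1]
        exact (add_lt_add_iff_left _).2 (Ordinal.mod_lt a (ne_of_gt hω1pos))
      exact absurd (h4.trans_le (h3.trans hc2)) (lt_irrefl a)
    refine ⟨a / ω1, ?_, ?_⟩
    · rw [pos_iff_ne_zero]
      intro h0
      apply ha
      rw [← Ordinal.div_add_mod a ω1, h0, hmod, mul_zero, zero_add]
    · conv_lhs => rw [← Ordinal.div_add_mod a ω1]
      rw [hmod, add_zero]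
  -- unboundedness
  have hunb : ∀ a < δ, ∃ b ∈ T, a ≤ b ∧ b < δ := by
    intro a ha
    have hdiv : a / ω1 < ω1 := (Ordinal.div_lt (ne_of_gt hω1pos)).2 ha
    have hsucc : a / ω1 + 1 < ω1 := by
      rw [Ordinal.add_one_eq_succ]; exact hω1lim.succ_lt hdiv
    have h4 : a < ω1 * (a / ω1 + 1) := by
      rw [Ordinal.add_one_eq_succ, Ordinal.mul_succ]
      conv_lhs => rw [← Ordinal.div_add_mod a ω1]
      exact (add_lt_add_iff_left _).2 (Ordinal.mod_lt a (ne_of_gt hω1pos))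
    exact ⟨ω1 * (a / ω1 + 1),
      ⟨a / ω1 + 1, zero_lt_one.trans_le (le_add_self), hsucc, rfl⟩,
      h4.le, (mul_lt_mul_iff_right₀ hω1pos).2 hsucc⟩
  -- closedness (club)
  have hclosed : ∀ a < δ, a ≠ 0 → (∀ b < a, ∃ c ∈ T, b < c ∧ c < a) → a ∈ T := by
    intro a ha ha0 h
    obtain ⟨q, hq0, hqeq⟩ := hkey a ha0 fun b hb => by
      obtain ⟨c, hcT, h1, h2⟩ := h b hb; exact ⟨c, hcT, h1, h2.le⟩
    exact ⟨q, hq0, (mul_lt_mul_iff_right₀ hω1pos).1 (hqeq ▸ ha), hqeq⟩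
  refine ⟨?_, ?_, ?_, ⟨hT_sub, hunb, hclosed⟩, ?_⟩
  -- Part 1: local compactness
  · haveI := aux_lc
    have hZ : IsClosed (Set.Iic Ordinal.omega0 ∪ T ∪ Set.Ici δ) := by
      rw [Ordinal.isClosed_iff_iSup]
      intro ι hι f hf
      set s := ⨆ i, f i with hs
      rcases le_or_gt s Ordinal.omega0 with h | h
      · exact Or.inl (Or.inl h)
      rcases le_or_gt δ s with h2 | h2
      · exact Or.inr h2
      have hex : ∀ b < s, ∃ c ∈ T, b < c ∧ c ≤ s := by
        intro b hb
        obtain ⟨i, hi⟩ := Ordinal.lt_iSup_iff.1 hb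
        rcases hf i with (hle | hT') | hge
        · obtain ⟨j, hj⟩ := Ordinal.lt_iSup_iff.1 h
          rcases hf j with (hle' | hT'') | hge'
          · exact absurd (hj.trans_le hle') (lt_irrefl _)
          · exact ⟨f j, hT'', (hi.trans_le hle).trans hj, Ordinal.le_iSup f j⟩
          · exact absurd (hge'.trans (Ordinal.le_iSup f j)) (not_le.2 h2)
        · exact ⟨f i, hT', hi, Ordinal.le_iSup f i⟩
        · exact absurd (hge.trans (Ordinal.le_iSup f i)) (not_le.2 h2)
      obtain ⟨q, hq0, hqeq⟩ := hkey s (ne_of_gt (Ordinal.omega0_pos.trans h)) hex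
      exact Or.inl (Or.inr ⟨q, hq0, (mul_lt_mul_iff_right₀ hω1pos).1 (hqeq ▸ h2), hqeq⟩)
    have hU : IsOpen (Set.Iio Ordinal.omega0 ∪ Set.Ioo Ordinal.omega0 δ) :=
      isOpen_Iio.union isOpen_Ioo
    have hE : E = (Set.Iio Ordinal.omega0 ∪ Set.Ioo Ordinal.omega0 δ) ∩
        (Set.Iic Ordinal.omega0 ∪ T ∪ Set.Ici δ) := by
      ext x
      constructor
      · rintro (hx | hx)
        · exact ⟨Or.inl hx, Or.inl (Or.inl (show x ≤ Ordinal.omega0 from le_of_lt hx))⟩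
        · exact ⟨Or.inr ⟨hω0lt.trans_le (hTlb x hx), hT_sub hx⟩, Or.inl (Or.inr hx)⟩
      · rintro ⟨h1, h2⟩
        rcases h1 with h1 | h1
        · exact Or.inl h1
        · rcases h2 with (h2 | h2) | h2
          · exact absurd h1.1 (not_lt.2 h2)
          · exact Or.inr h2
          · exact absurd h1.2 (not_lt.2 h2)
    have hlc : IsLocallyClosed E := ⟨_, _, hU, hZ, hE⟩
    exact hlc.locallyCompactSpace
  -- Part 2: T is a tail of E
  · refine ⟨Ordinal.omega0, hω0lt.trans_le (by
      calc ω1 = ω1 * 1 := (mul_one _).symm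
      _ ≤ δ := mul_le_mul_right (Order.one_le_iff_pos.2 hω1pos) _), ?_⟩
    ext x
    constructor
    · intro hx
      exact ⟨Or.inr hx, (hω0lt.le).trans (hTlb x hx)⟩
    · rintro ⟨hx | hx, hω⟩
      · exact absurd hx (not_lt.2 hω)
      · exact hx
  -- Part 3: homeomorphism with ω₁
  · have hone_add : ∀ ξ < ω1, 1 + ξ < ω1 := by
      intro ξ hξ
      rcases lt_or_ge ξ Ordinal.omega0 with h | h
      · exact (Ordinal.principal_add_omega0 Ordinal.one_lt_omega0 h).trans hω0lt
      · rw [Ordinal.one_add_of_omega0_le h]; exact hξ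
    have hg : Order.IsNormal ((fun x => ω1 * x) ∘ (fun x => 1 + x)) :=
      (Ordinal.isNormal_mul_right hω1pos).comp (Ordinal.isNormal_add_right 1)
    have hemb : Topology.IsEmbedding
        (((fun x => ω1 * x) ∘ (fun x => 1 + x)) ∘ (Subtype.val : ↥(Set.Iio ω1) → Ordinal)) :=
      (aux_embed hg).comp Topology.IsEmbedding.subtypeVal
    have hrange : Set.range (((fun x => ω1 * x) ∘ (fun x => 1 + x)) ∘
        (Subtype.val : ↥(Set.Iio ω1) → Ordinal)) = T := by
      ext x
      constructor
      · rintro ⟨⟨ξ, hξ⟩, rfl⟩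
        exact ⟨1 + ξ, zero_lt_one.trans_le (le_self_add), hone_add ξ hξ, rfl⟩
      · rintro ⟨ξ, h0, h1, rfl⟩
        refine ⟨⟨ξ - 1, (Ordinal.sub_le_self ξ 1).trans_lt h1⟩, ?_⟩
        show ω1 * (1 + (ξ - 1)) = ω1 * ξ
        rw [Ordinal.add_sub_cancel_of_le (Order.one_le_iff_pos.2 h0)]
    exact ⟨((hemb.toHomeomorph).trans (Homeomorph.setCongr hrange)).symm⟩
  -- Part 5: no tail of E is a final segment
  · rintro ⟨β, hβ, γ, hγ, heq⟩
    obtain ⟨c, hcT, hγc, hcδ⟩ := hunb γ hγ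
    have hc1 : c + 1 < δ := by
      rw [Ordinal.add_one_eq_succ]; exact hδlim.succ_lt hcδ
    have hmem : c + 1 ∈ Set.Ico γ δ := ⟨hγc.trans (le_of_lt (lt_add_one c)), hc1⟩
    rw [← heq] at hmem
    obtain ⟨hE', -⟩ := hmem
    have hωc : Ordinal.omega0 < c := hω0lt.trans_le (hTlb c hcT)
    rcases hE' with h | h
    · exact absurd h (not_lt.2 ((hωc.le).trans (le_of_lt (lt_add_one c))))
    · obtain ⟨ξ, hξ0, hξ1, hξeq⟩ := h
      have hlim2 : Order.IsSuccLimit (ω1 * ξ) := by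
        rcases Ordinal.zero_or_succ_or_isSuccLimit ξ with rfl | ⟨η, rfl⟩ | hl
        · exact absurd hξ0 (lt_irrefl 0)
        · rw [Ordinal.mul_succ]; exact Ordinal.isSuccLimit_add _ hω1lim
        · exact (Ordinal.isNormal_mul_right hω1pos).map_isSuccLimit hl
      rw [← hξeq, Ordinal.add_one_eq_succ] at hlim2
      exact Order.not_isSuccLimit_succ c hlim2
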